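/- The function x ↦ x²·sinc²(x²) is integrable on ℝ and ∫_ℝ x² sinc²(x²) dx = √π. -/

import Mathlib

open MeasureTheory Real

/-- `sinc x = sin x / x` for `x ≠ 0`, and `sinc 0 = 1`. -/
noncomputable def sinc (x : ℝ) : ℝ := if x = 0 then 1 else Real.sin x / x

open Set

lemma re_cpow_half (w : ℂ) (hw : w ≠ 0) :
    (w ^ (1/2 : ℂ)).re = Real.sqrt ((‖w‖ + w.re) / 2) := by
  have habs : 0 < ‖w‖ := norm_pos_iff.mpr hw
  rw [Complex.cpow_def_of_ne_zero hw, Complex.exp_re]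
  have hre : (Complex.log w * (1/2)).re = Real.log ‖w‖ / 2 := by
    simp [Complex.mul_re, Complex.log_re, Complex.log_im, div_eq_mul_inv]
  have him : (Complex.log w * (1/2)).im = Complex.arg w / 2 := by
    simp [Complex.mul_im, Complex.log_re, Complex.log_im, div_eq_mul_inv]
  rw [hre, him, Real.cos_half (Complex.arg_mem_Ioc w).1.le (Complex.arg_le_pi w),
    Complex.cos_arg hw]
  have hexp : Real.exp (Real.log ‖w‖ / 2) = Real.sqrt ‖w‖ := by
    rw [Real.sqrt_eq_rpow, Real.rpow_def_of_pos habs]; ring_nf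
  rw [hexp, ← Real.sqrt_mul habs.le]
  congr 1
  field_simp

noncomputable def hfun (s : ℝ) : ℝ :=
  Real.sqrt (π/s)/2 - Real.sqrt (π*(Real.sqrt (s^2+4) + s)/(2*(s^2+4)))/2

lemma inner_integrable {s : ℝ} (hs : 0 < s) :
    Integrable (fun x : ℝ => Real.sin (x^2)^2 * Real.exp (-s*x^2)) := by
  refine (integrable_exp_neg_mul_sq hs).mono ?_ (Filter.Eventually.of_forall fun x => ?_)
  · apply Continuous.aestronglyMeasurable; fun_prop
  · simp only [norm_mul, norm_pow, Real.norm_eq_abs, Real.abs_exp]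
    calc |Real.sin (x^2)| ^ 2 * Real.exp (-s*x^2)
        ≤ 1 * Real.exp (-s*x^2) := by
          apply mul_le_mul_of_nonneg_right _ (Real.exp_nonneg _)
          exact pow_le_one₀ (abs_nonneg _) (Real.abs_sin_le_one _)
      _ = Real.exp (-s*x^2) := one_mul _

lemma inner_integral {s : ℝ} (hs : 0 < s) :
    ∫ x : ℝ, Real.sin (x^2)^2 * Real.exp (-s*x^2) = hfun s := by
  unfold hfun
  have hb : 0 < ((s:ℂ) - 2*Complex.I).re := by simp [hs]
  have hbne : ((s:ℂ) - 2*Complex.I) ≠ 0 := by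
    intro h; rw [Complex.ext_iff] at h; simp at h
  have hg := integral_gaussian_complex hb
  have hr : (0:ℝ) < Real.sqrt (s^2+4) := Real.sqrt_pos.2 (by positivity)
  have hr2 : Real.sqrt (s^2+4) ^ 2 = s^2+4 := Real.sq_sqrt (by positivity)
  -- pointwise decomposition
  have hpt : ∀ x : ℝ, Real.sin (x^2)^2 * Real.exp (-s*x^2)
      = Real.exp (-s*x^2)/2 - (Complex.exp (-((s:ℂ) - 2*Complex.I)*(x:ℂ)^2)).re / 2 := by
    intro x
    have hre : (Complex.exp (-((s:ℂ) - 2*Complex.I)*(x:ℂ)^2)).re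
        = Real.exp (-s*x^2) * Real.cos (2*x^2) := by
      rw [Complex.exp_re]
      congr 2
      · simp [Complex.mul_re, ← Complex.ofReal_pow]
      · simp [Complex.mul_im, ← Complex.ofReal_pow]
    rw [hre]
    have h1 : Real.sin (x^2)^2 = 1/2 - Real.cos (2*(x^2))/2 := by
      have := Real.cos_sq (x^2)
      have h2 := Real.sin_sq_add_cos_sq (x^2)
      linarith
    rw [h1]; ring
  rw [funext hpt]
  have hc : Integrable (fun x : ℝ => (Complex.exp (-((s:ℂ) - 2*Complex.I)*(x:ℂ)^2)).re) :=
    (integrable_cexp_neg_mul_sq hb).re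
  have hswap : (∫ x : ℝ, (Complex.exp (-((s:ℂ) - 2*Complex.I)*(x:ℂ)^2)).re)
      = (∫ x : ℝ, Complex.exp (-((s:ℂ) - 2*Complex.I)*(x:ℂ)^2)).re := by
    simpa using (integral_re (integrable_cexp_neg_mul_sq hb))
  rw [integral_sub ((integrable_exp_neg_mul_sq hs).div_const 2) (hc.div_const 2),
    integral_div, integral_div, integral_gaussian, hswap, hg,
    re_cpow_half _ (by simp [div_ne_zero, Real.pi_ne_zero, hbne] :
      ((π:ℂ) / ((s:ℂ) - 2*Complex.I)) ≠ 0)]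
  congr 2
  have habs2 : ‖(s:ℂ) - 2*Complex.I‖ = Real.sqrt (s^2+4) := by
    rw [Complex.norm_def]
    congr 1
    simp [Complex.normSq_apply]
    ring
  have hre2 : ((π:ℂ) / ((s:ℂ) - 2*Complex.I)).re = π * s / (s^2+4) := by
    rw [Complex.div_re]
    simp [Complex.normSq_apply]
    ring
  rw [norm_div, habs2, hre2, Complex.norm_real, Real.norm_eq_abs, _root_.abs_of_nonneg Real.pi_pos.le]
  rw [div_add_div _ _ (ne_of_gt hr) (by positivity : (s^2+4:ℝ) ≠ 0)]
  rw [div_div]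
  congr 1
  rw [div_eq_div_iff (by positivity) (by positivity)]
  linear_combination (-(2*π*(s^2+4))) * hr2

lemma integral_exp_neg_mul_Ioi {c : ℝ} (hc : 0 < c) :
    ∫ s in Ioi (0:ℝ), Real.exp (-c*s) = 1/c := by
  have h := integral_Ioi_of_hasDerivAt_of_tendsto' (a := 0)
    (f := fun s => -Real.exp (-c*s)/c) (f' := fun s => Real.exp (-c*s)) (m := 0)
    (fun x _ => ?_) ((exp_neg_integrableOn_Ioi 0 hc)) ?_
  · rw [h]; field_simp; simp
  · have h1 : HasDerivAt (fun s : ℝ => -c*s) (-c) x := by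
      simpa using (hasDerivAt_id x).const_mul (-c)
    have h2 := (h1.exp).neg.div_const c
    refine (h2.congr_deriv ?_)
    field_simp
  · have h3 : Filter.Tendsto (fun s : ℝ => -c*s) Filter.atTop Filter.atBot := by
      have h5 := (Filter.tendsto_neg_atBot_iff (α := ℝ)).mpr
        (Filter.Tendsto.const_mul_atTop hc Filter.tendsto_id)
      exact h5.congr (fun s => by simp only [id_eq]; ring)
    have h6 : Filter.Tendsto (fun s : ℝ => Real.exp (-c*s)) Filter.atTop (nhds 0) :=
      Real.tendsto_exp_atBot.comp h3
    have h4 := (h6.neg.div_const c)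
    simp only [neg_zero, zero_div] at h4
    exact h4

lemma pointwise_outer (x : ℝ) :
    ∫ s in Ioi (0:ℝ), Real.sin (x^2)^2 * Real.exp (-s*x^2)
      = x^2 * (_root_.sinc (x^2))^2 := by
  rcases eq_or_ne x 0 with rfl | hx
  · simp
  · have hc : 0 < x^2 := by positivity
    rw [integral_const_mul]
    have : ∀ s ∈ Ioi (0:ℝ), Real.exp (-s*x^2) = Real.exp (-(x^2)*s) := by
      intro s _; ring_nf
    rw [setIntegral_congr_fun measurableSet_Ioi this, integral_exp_neg_mul_Ioi hc]
    rw [_root_.sinc, if_neg (ne_of_gt hc)]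
    field_simp

noncomputable def Cmom : ℝ := ∫ x : ℝ, x^2 * Real.exp (-x^2)

lemma Cmom_int : Integrable (fun x : ℝ => x^2 * Real.exp (-x^2)) := by
  have h := integrable_rpow_mul_exp_neg_mul_sq (b := 1) one_pos
    (s := 2) (by norm_num)
  simp only [one_mul, neg_mul] at h ⊢
  convert h using 2 with x
  rw [show ((2:ℝ) = ((2:ℕ):ℝ)) by norm_num, Real.rpow_natCast]

lemma Cmom_nonneg : 0 ≤ Cmom :=
  integral_nonneg (fun x => by positivity)

lemma moment_integrable {s : ℝ} (hs : 0 < s) :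
    Integrable (fun x : ℝ => x^2 * Real.exp (-s*x^2)) := by
  have h := integrable_rpow_mul_exp_neg_mul_sq hs (s := 2) (by norm_num)
  convert h using 2 with x
  rw [show ((2:ℝ) = ((2:ℕ):ℝ)) by norm_num, Real.rpow_natCast]

lemma moment_value {s : ℝ} (hs : 0 < s) :
    ∫ x : ℝ, x^2 * Real.exp (-s*x^2) = Cmom * s ^ (-(3:ℝ)/2) := by
  have hsq : 0 < Real.sqrt s := Real.sqrt_pos.2 hs
  have hss : Real.sqrt s * Real.sqrt s = s := Real.mul_self_sqrt hs.le
  have h := Measure.integral_comp_mul_left (fun t : ℝ => t^2 * Real.exp (-t^2)) (Real.sqrt s)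
  have heq : ∀ x : ℝ, (Real.sqrt s * x)^2 * Real.exp (-(Real.sqrt s * x)^2)
      = s * (x^2 * Real.exp (-s*x^2)) := by
    intro x
    rw [mul_pow]
    rw [show Real.sqrt s ^2 * x^2 = s * x^2 by rw [sq]; rw [hss]]
    ring_nf
  simp only [heq] at h
  rw [integral_const_mul] at h
  have hCs : s * ∫ x : ℝ, x^2 * Real.exp (-s*x^2) = (Real.sqrt s)⁻¹ * Cmom := by
    rw [h, abs_of_nonneg (by positivity : (0:ℝ) ≤ (Real.sqrt s)⁻¹), smul_eq_mul]; rfl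
  have : ∫ x : ℝ, x^2 * Real.exp (-s*x^2) = s⁻¹ * (Real.sqrt s)⁻¹ * Cmom := by
    field_simp at hCs ⊢
    linarith [hCs]
  rw [this]
  rw [show (-(3:ℝ)/2 : ℝ) = (-1 : ℝ) + (-(1/2) : ℝ) by norm_num,
    Real.rpow_add hs, Real.rpow_neg_one, Real.rpow_neg hs.le,
    ← Real.sqrt_eq_rpow]
  ring

lemma H_nonneg {s : ℝ} (hs : 0 < s) : 0 ≤ hfun s := by
  rw [← inner_integral hs]
  exact integral_nonneg (fun x => by positivity)

lemma H_le_one {s : ℝ} (hs : 0 < s) : hfun s ≤ Real.sqrt (π/s)/2 := by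
  have : 0 ≤ Real.sqrt (π*(Real.sqrt (s^2+4) + s)/(2*(s^2+4)))/2 := by positivity
  rw [hfun]; linarith

lemma H_le_two {s : ℝ} (hs : 0 < s) : hfun s ≤ Cmom * s ^ (-(3:ℝ)/2) := by
  rw [← inner_integral hs, ← moment_value hs]
  apply integral_mono (inner_integrable hs) (moment_integrable hs)
  intro x
  have h1 : Real.sin (x^2)^2 ≤ x^2 := by
    have h2 : |Real.sin (x^2)| ≤ 1 := Real.abs_sin_le_one _
    have h3 : |Real.sin (x^2)| ≤ |x^2| := Real.abs_sin_le_abs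
    calc Real.sin (x^2)^2 = |Real.sin (x^2)| * |Real.sin (x^2)| := by
          rw [← abs_mul, ← sq, abs_of_nonneg (sq_nonneg _)]
      _ ≤ 1 * |x^2| := mul_le_mul h2 h3 (abs_nonneg _) zero_le_one
      _ = x^2 := by rw [one_mul, abs_of_nonneg (sq_nonneg _)]
  exact mul_le_mul_of_nonneg_right h1 (Real.exp_nonneg _)

lemma hfun_contOn : ContinuousOn hfun (Ioi 0) := by
  apply ContinuousOn.sub
  · apply ContinuousOn.div_const
    apply Real.continuous_sqrt.comp_continuousOn
    exact continuousOn_const.div continuousOn_id (fun s hs => ne_of_gt hs)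
  · apply ContinuousOn.div_const
    apply Real.continuous_sqrt.comp_continuousOn
    apply ContinuousOn.div
    · fun_prop
    · fun_prop
    · intro s _; positivity

lemma hfun_integrableOn : IntegrableOn hfun (Ioi (0:ℝ)) := by
  have hmeas : AEStronglyMeasurable hfun (volume.restrict (Ioi (0:ℝ))) :=
    hfun_contOn.aestronglyMeasurable measurableSet_Ioi
  rw [← Ioc_union_Ioi_eq_Ioi (by norm_num : (0:ℝ) ≤ 1)]
  apply IntegrableOn.union
  · -- on Ioc 0 1, dominated by √π * s^(-1/2) / 2
    have hdom : IntegrableOn (fun s : ℝ => Real.sqrt π * s ^ (-(1:ℝ)/2) / 2) (Ioc (0:ℝ) 1) := by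
      have h5 : IntervalIntegrable (fun x : ℝ => x ^ (-(1:ℝ)/2)) volume 0 1 :=
        intervalIntegral.intervalIntegrable_rpow' (by norm_num)
      rw [intervalIntegrable_iff_integrableOn_Ioc_of_le (by norm_num : (0:ℝ) ≤ 1)] at h5
      exact (h5.const_mul _).div_const 2
    apply Integrable.mono hdom (hmeas.mono_measure (Measure.restrict_mono Ioc_subset_Ioi_self le_rfl))
    rw [ae_restrict_iff' measurableSet_Ioc]
    filter_upwards with s hs
    have hs0 : 0 < s := hs.1
    rw [Real.norm_eq_abs, abs_of_nonneg (H_nonneg hs0), Real.norm_eq_abs]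
    have h1 : hfun s ≤ Real.sqrt (π/s)/2 := H_le_one hs0
    have h2 : Real.sqrt (π/s) = Real.sqrt π * s ^ (-(1:ℝ)/2) := by
      rw [Real.sqrt_div Real.pi_pos.le, show (-(1:ℝ)/2) = -((1:ℝ)/2) by norm_num,
        Real.rpow_neg hs0.le, ← Real.sqrt_eq_rpow, div_eq_mul_inv]
    rw [abs_of_nonneg (by positivity : (0:ℝ) ≤ Real.sqrt π * s ^ (-(1:ℝ)/2) / 2)]
    rw [← h2]; exact h1
  · -- on Ioi 1, dominated by Cmom * s^(-3/2)
    have hdom2 : IntegrableOn (fun s : ℝ => Cmom * s ^ (-(3:ℝ)/2)) (Ioi (1:ℝ)) :=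
      (integrableOn_Ioi_rpow_of_lt (by norm_num : (-(3:ℝ)/2) < -1) one_pos).const_mul Cmom
    apply Integrable.mono hdom2 (hmeas.mono_measure (Measure.restrict_mono (Ioi_subset_Ioi (by norm_num : (0:ℝ) ≤ 1)) le_rfl))
    rw [ae_restrict_iff' measurableSet_Ioi]
    filter_upwards with s hs
    have hs0 : (0:ℝ) < s := lt_trans one_pos hs
    rw [Real.norm_eq_abs, abs_of_nonneg (H_nonneg hs0), Real.norm_eq_abs,
      abs_of_nonneg (mul_nonneg Cmom_nonneg (Real.rpow_nonneg hs0.le _))]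
    exact H_le_two hs0

noncomputable def Phi (s : ℝ) : ℝ :=
  Real.sqrt π * Real.sqrt s - Real.sqrt (π/2) * Real.sqrt (Real.sqrt (s^2+4) + s)

lemma Phi_cont : Continuous Phi := by
  unfold Phi
  fun_prop

lemma Phi_deriv {s : ℝ} (hs : 0 < s) : HasDerivAt Phi (hfun s) s := by
  have hr0 : 0 < Real.sqrt (s^2+4) := Real.sqrt_pos.2 (by positivity)
  have hr2 : Real.sqrt (s^2+4) * Real.sqrt (s^2+4) = s^2+4 :=
    Real.mul_self_sqrt (by positivity)
  have hrs : 0 < Real.sqrt (s^2+4) + s := by linarith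
  have hsqrs : Real.sqrt (Real.sqrt (s^2+4) + s) * Real.sqrt (Real.sqrt (s^2+4) + s)
      = Real.sqrt (s^2+4) + s := Real.mul_self_sqrt hrs.le
  have hsq0 : 0 < Real.sqrt (Real.sqrt (s^2+4) + s) := Real.sqrt_pos.2 hrs
  have h1 : HasDerivAt (fun t : ℝ => Real.sqrt π * Real.sqrt t)
      (Real.sqrt π * (1/(2*Real.sqrt s))) s :=
    (Real.hasDerivAt_sqrt (ne_of_gt hs)).const_mul _
  have h2 : HasDerivAt (fun t : ℝ => t^2+4) (2*s) s := by
    simpa using (hasDerivAt_pow 2 s).add_const 4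
  have h3 : HasDerivAt (fun t : ℝ => Real.sqrt (t^2+4)) (2*s/(2*Real.sqrt (s^2+4))) s :=
    h2.sqrt (by positivity)
  have h4 : HasDerivAt (fun t : ℝ => Real.sqrt (t^2+4) + t)
      (2*s/(2*Real.sqrt (s^2+4)) + 1) s := h3.add (hasDerivAt_id s)
  have h5 : HasDerivAt (fun t : ℝ => Real.sqrt (π/2) * Real.sqrt (Real.sqrt (t^2+4) + t))
      (Real.sqrt (π/2) * ((2*s/(2*Real.sqrt (s^2+4)) + 1)/(2*Real.sqrt (Real.sqrt (s^2+4) + s)))) s :=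
    (h4.sqrt (ne_of_gt hrs)).const_mul _
  have h6 := h1.sub h5
  refine h6.congr_deriv ?_
  symm
  unfold hfun
  have key : Real.sqrt (π*(Real.sqrt (s^2+4) + s)/(2*(s^2+4)))
      = Real.sqrt (π/2) * Real.sqrt (Real.sqrt (s^2+4) + s) / Real.sqrt (s^2+4) := by
    have e1 : Real.sqrt (π/2) * Real.sqrt (Real.sqrt (s^2+4)+s)
        = Real.sqrt ((π/2)*(Real.sqrt (s^2+4)+s)) := (Real.sqrt_mul (by positivity) _).symm
    rw [e1, ← Real.sqrt_div (by positivity)]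
    congr 1
    field_simp
  have key2 : Real.sqrt (π/s) = Real.sqrt π / Real.sqrt s :=
    Real.sqrt_div Real.pi_pos.le s
  rw [key, key2]
  have hss : 0 < Real.sqrt s := Real.sqrt_pos.2 hs
  have h7 : (2*s/(2*Real.sqrt (s^2+4))+1) = (Real.sqrt (s^2+4)+s)/Real.sqrt (s^2+4) := by
    field_simp
    ring
  have t2 : Real.sqrt (π/2) * ((2*s/(2*Real.sqrt (s^2+4))+1)/(2*Real.sqrt (Real.sqrt (s^2+4)+s)))
      = Real.sqrt (π/2) * Real.sqrt (Real.sqrt (s^2+4)+s) / Real.sqrt (s^2+4) / 2 := by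
    have hne1 : Real.sqrt (Real.sqrt (s^2+4)+s) ≠ 0 := ne_of_gt hsq0
    have hne2 : Real.sqrt (s^2+4) ≠ 0 := ne_of_gt hr0
    rw [h7]
    field_simp
    linear_combination (-1 : ℝ) * hsqrs
  rw [t2]
  field_simp

lemma sqrt_sub_sqrt_le {a b : ℝ} (hb : 0 < b) (hab : b ≤ a) :
    Real.sqrt a - Real.sqrt b ≤ (a-b)/Real.sqrt b := by
  have hsb : 0 < Real.sqrt b := Real.sqrt_pos.2 hb
  have hbb : Real.sqrt b^2 = b := Real.sq_sqrt hb.le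
  have h : Real.sqrt a ≤ Real.sqrt b + (a-b)/Real.sqrt b := by
    have h2 : a ≤ (Real.sqrt b + (a-b)/Real.sqrt b)^2 := by
      have hexp : (Real.sqrt b + (a-b)/Real.sqrt b)^2
          = b + 2*(a-b) + ((a-b)/Real.sqrt b)^2 := by
        have hne : Real.sqrt b ≠ 0 := ne_of_gt hsb
        field_simp
        nlinarith [hbb]
      nlinarith [sq_nonneg ((a-b)/Real.sqrt b), hab, hexp]
    calc Real.sqrt a ≤ Real.sqrt ((Real.sqrt b + (a-b)/Real.sqrt b)^2) := Real.sqrt_le_sqrt h2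
      _ = Real.sqrt b + (a-b)/Real.sqrt b :=
        Real.sqrt_sq (add_nonneg hsb.le (div_nonneg (by linarith) hsb.le))
  linarith

lemma Phi_tendsto : Filter.Tendsto Phi Filter.atTop (nhds 0) := by
  have key : ∀ T : ℝ, 1 ≤ T → 0 ≤ -Phi T ∧ -Phi T ≤ (2*Real.sqrt (π/2)) * T⁻¹ := by
    intro T hT
    have hT0 : 0 < T := lt_of_lt_of_le one_pos hT
    have hr0 : 0 < Real.sqrt (T^2+4) := Real.sqrt_pos.2 (by positivity)
    have hr2 : Real.sqrt (T^2+4) * Real.sqrt (T^2+4) = T^2+4 :=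
      Real.mul_self_sqrt (by positivity)
    have hTr : T ≤ Real.sqrt (T^2+4) := by
      have h1 : Real.sqrt (T^2) ≤ Real.sqrt (T^2+4) := Real.sqrt_le_sqrt (by linarith)
      rwa [Real.sqrt_sq hT0.le] at h1
    have e2 : Real.sqrt π * Real.sqrt T = Real.sqrt (π/2) * Real.sqrt (2*T) := by
      rw [← Real.sqrt_mul Real.pi_pos.le, ← Real.sqrt_mul (by positivity)]
      congr 1
      ring
    have hPhi : -Phi T = Real.sqrt (π/2) * (Real.sqrt (Real.sqrt (T^2+4)+T) - Real.sqrt (2*T)) := by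
      unfold Phi; rw [e2]; ring
    have h2T : 2*T ≤ Real.sqrt (T^2+4)+T := by linarith
    have hd := sqrt_sub_sqrt_le (by positivity : (0:ℝ) < 2*T) h2T
    have hrT : Real.sqrt (T^2+4)+T - 2*T ≤ 2/T := by
      have hgoal : T * (Real.sqrt (T^2+4) - T) ≤ 2 := by
        nlinarith [hr2, hTr, sq_nonneg (Real.sqrt (T^2+4) - T)]
      rw [div_eq_inv_mul]
      have := mul_le_mul_of_nonneg_left hgoal (by positivity : (0:ℝ) ≤ T⁻¹)
      rw [← mul_assoc, inv_mul_cancel₀ (ne_of_gt hT0), one_mul] at this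
      linarith
    have hsq1 : (1:ℝ) ≤ Real.sqrt (2*T) := by
      rw [show (1:ℝ) = Real.sqrt 1 from (Real.sqrt_one).symm]
      exact Real.sqrt_le_sqrt (by linarith)
    constructor
    · rw [hPhi]
      apply mul_nonneg (Real.sqrt_nonneg _)
      have := Real.sqrt_le_sqrt h2T
      linarith
    · rw [hPhi]
      have hb1 : Real.sqrt (Real.sqrt (T^2+4)+T) - Real.sqrt (2*T)
          ≤ (Real.sqrt (T^2+4)+T - 2*T)/Real.sqrt (2*T) := hd
      have hXnn : (0:ℝ) ≤ Real.sqrt (T^2+4)+T - 2*T := by linarith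
      have hb2 : (Real.sqrt (T^2+4)+T - 2*T)/Real.sqrt (2*T) ≤ 2/T := by
        calc (Real.sqrt (T^2+4)+T - 2*T)/Real.sqrt (2*T)
            ≤ (Real.sqrt (T^2+4)+T - 2*T)/1 :=
              div_le_div_of_nonneg_left hXnn one_pos hsq1
          _ = Real.sqrt (T^2+4)+T - 2*T := div_one _
          _ ≤ 2/T := hrT
      calc Real.sqrt (π/2) * (Real.sqrt (Real.sqrt (T^2+4)+T) - Real.sqrt (2*T))
          ≤ Real.sqrt (π/2) * (2/T) := by
            apply mul_le_mul_of_nonneg_left _ (Real.sqrt_nonneg _)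
            linarith
        _ = (2*Real.sqrt (π/2)) * T⁻¹ := by field_simp
  have hg : Filter.Tendsto (fun T : ℝ => (2*Real.sqrt (π/2)) * T⁻¹) Filter.atTop (nhds 0) := by
    have := tendsto_inv_atTop_zero (𝕜 := ℝ)
    simpa using this.const_mul (2*Real.sqrt (π/2))
  have hnegPhi : Filter.Tendsto (fun T => -Phi T) Filter.atTop (nhds 0) := by
    apply squeeze_zero' ?_ ?_ hg
    · filter_upwards [Filter.eventually_ge_atTop 1] with T hT
      exact (key T hT).1
    · filter_upwards [Filter.eventually_ge_atTop 1] with T hT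
      exact (key T hT).2
  have := hnegPhi.neg
  simpa using this

lemma outer_value : ∫ s in Ioi (0:ℝ), hfun s = Real.sqrt π := by
  have h := integral_Ioi_of_hasDerivAt_of_tendsto (a := 0) (f := Phi) (f' := hfun) (m := 0)
    Phi_cont.continuousWithinAt (fun s hs => Phi_deriv hs) hfun_integrableOn Phi_tendsto
  rw [h]
  unfold Phi
  rw [show ((0:ℝ)^2+4) = 4 by norm_num,
    show Real.sqrt 4 = 2 by rw [show (4:ℝ)=2^2 by norm_num, Real.sqrt_sq (by norm_num : (0:ℝ) ≤ 2)]]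
  rw [Real.sqrt_zero]
  rw [show (2:ℝ) + 0 = 2 by norm_num]
  rw [show Real.sqrt (π/2) * Real.sqrt 2 = Real.sqrt π by
    rw [← Real.sqrt_mul (by positivity)]; norm_num]
  ring

/-- The function `x ↦ x²·sinc²(x²)` is integrable on ℝ and
`∫_ℝ x² sinc²(x²) dx = √π`. -/
theorem integral_sq_mul_sinc_sq :
    Integrable (fun x : ℝ => x ^ 2 * (_root_.sinc (x ^ 2)) ^ 2) ∧
    ∫ x : ℝ, x ^ 2 * (_root_.sinc (x ^ 2)) ^ 2 = Real.sqrt Real.pi := by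
  set μ := volume.restrict (Ioi (0:ℝ)) with hμ
  set G : ℝ × ℝ → ℝ := fun p => Real.sin (p.2^2)^2 * Real.exp (-p.1*p.2^2) with hGdef
  have hGcont : Continuous G := by
    apply Continuous.mul
    · fun_prop
    · fun_prop
  have hGm : AEStronglyMeasurable G (μ.prod volume) := hGcont.aestronglyMeasurable
  have hnormint : ∀ᵐ s ∂μ, (∫ x : ℝ, ‖G (s, x)‖) = hfun s := by
    rw [hμ, ae_restrict_iff' measurableSet_Ioi]
    filter_upwards with s hs
    rw [← inner_integral hs]
    congr 1
    funext x
    rw [Real.norm_eq_abs, abs_of_nonneg (by positivity)]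
  have hint : Integrable G (μ.prod volume) := by
    rw [integrable_prod_iff hGm]
    refine ⟨?_, ?_⟩
    · rw [hμ, ae_restrict_iff' measurableSet_Ioi]
      filter_upwards with s hs
      exact inner_integrable hs
    · exact (hfun_integrableOn.congr (hnormint.mono fun s h => h.symm))
  have hswap := integral_integral_swap
    (f := fun s x => Real.sin (x^2)^2 * Real.exp (-s*x^2)) (μ := μ) (ν := volume) hint
  have hmarg : Integrable (fun x : ℝ => ∫ s, G (s, x) ∂μ) volume := hint.integral_prod_right
  have hpt : (fun x : ℝ => ∫ s, G (s, x) ∂μ) = fun x : ℝ => x^2 * (_root_.sinc (x^2))^2 := by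
    funext x
    exact pointwise_outer x
  have hinner : ∀ᵐ s ∂μ, (∫ x : ℝ, Real.sin (x^2)^2 * Real.exp (-s*x^2)) = hfun s := by
    rw [hμ, ae_restrict_iff' measurableSet_Ioi]
    filter_upwards with s hs
    exact inner_integral hs
  constructor
  · rw [← hpt]; exact hmarg
  · calc ∫ x : ℝ, x ^ 2 * (_root_.sinc (x ^ 2)) ^ 2
        = ∫ x : ℝ, ∫ s, G (s, x) ∂μ := by rw [hpt]
      _ = ∫ s, (∫ x : ℝ, Real.sin (x^2)^2 * Real.exp (-s*x^2)) ∂μ := hswap.symm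
      _ = ∫ s, hfun s ∂μ := integral_congr_ae hinner
      _ = Real.sqrt π := outer_value
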